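/- Let G be a finitely generated group with finite symmetric generating set S acting (not necessarily freely) on a set X, and suppose there is an exhaustion X₁ ⊆ X₂ ⊆ ⋯ ⊆ X of X by finite subsets with ⋃_k X_k = X and |S·X_k \ X_k| / |X_k| → 0 as k → ∞. Let H be a group such that for every x ∈ X the stabilizer G_x embeds in H (admits an injective group homomorphism into H). Then G is a generalized amenable extension of H. -/

import Mathlib

set_option synthInstance.maxHeartbeats 1000000
set_option maxHeartbeats 1000000

open scoped Pointwise

noncomputable section

/-- The number of `H`-orbits of a (right-)`H`-invariant subset `Y`, i.e. `|Y/H|`. -/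
def orbitCount (H : Type*) [Group H] {X : Type*} [MulAction Hᵐᵒᵖ X] (Y : Set X) : ℕ :=
  ((fun x => Quotient.mk (MulAction.orbitRel Hᵐᵒᵖ X) x) '' Y).ncard

/-- `G` (with finite symmetric generating set `S`) is a generalized amenable extension of
`H`: there is a set `X` with a free left `G`-action and a commuting free right `H`-action
(modelled as a left `Hᵐᵒᵖ`-action), and an exhaustion `X₁ ⊆ X₂ ⊆ ⋯` of `X` by
`H`-invariant subsets with finitely many `H`-orbits such that
`|(S·X_k \ X_k)/H| / |X_k/H| → 0`. -/
def IsGeneralizedAmenableExtension (G : Type u) (H : Type v) [Group G] [Group H]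
    (S : Finset G) : Prop :=
  ∃ (X : Type (max u v)) (iG : MulAction G X) (iH : MulAction Hᵐᵒᵖ X),
    letI := iG
    letI := iH
    (∀ (g : G) (h : Hᵐᵒᵖ) (x : X), g • h • x = h • g • x) ∧
    (∀ (g : G) (x : X), g • x = x → g = 1) ∧
    (∀ (h : Hᵐᵒᵖ) (x : X), h • x = x → h = 1) ∧
    ∃ Xk : ℕ → Set X,
      (∀ (k : ℕ) (h : Hᵐᵒᵖ), ∀ x ∈ Xk k, h • x ∈ Xk k) ∧
      Monotone Xk ∧
      (⋃ k, Xk k) = Set.univ ∧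
      (∀ k, ((fun x => Quotient.mk (MulAction.orbitRel Hᵐᵒᵖ X) x) '' Xk k).Finite) ∧
      Filter.Tendsto
        (fun k => (orbitCount H (((S : Set G) • Xk k) \ Xk k) : ℝ) / (orbitCount H (Xk k)))
        Filter.atTop (nhds 0)



section Aux

variable {G H X : Type*} [Group G] [Group H] [MulAction G X]

def repPt (G : Type*) [Group G] {X : Type*} [MulAction G X] (x : X) : X :=
  (Quotient.mk (MulAction.orbitRel G X) x).out

lemma repPt_smul (g : G) (x : X) : repPt G (g • x) = repPt G x := by
  unfold repPt
  congr 1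
  exact Quotient.sound ⟨g, rfl⟩

lemma exists_secG (x : X) : ∃ g : G, g • repPt G x = x := by
  obtain ⟨g, hg⟩ := Quotient.exact ((Quotient.mk (MulAction.orbitRel G X) x).out_eq)
  exact ⟨g⁻¹, by rw [show repPt G x = g • x from hg.symm, inv_smul_smul]⟩

def secG (G : Type*) [Group G] {X : Type*} [MulAction G X] (x : X) : G :=
  (exists_secG (G := G) x).choose

lemma secG_spec (x : X) : secG G x • repPt G x = x := (exists_secG x).choose_spec

variable (hstab : ∀ x : X, ∃ φ : MulAction.stabilizer G x →* H, Function.Injective φ)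

open Classical in
def psi (y : X) (g : G) : H :=
  if h : g • y = y then (hstab y).choose ⟨g, MulAction.mem_stabilizer_iff.mpr h⟩ else 1

lemma psi_mul {y : X} {a b : G} (ha : a • y = y) (hb : b • y = y) :
    psi hstab y (a * b) = psi hstab y a * psi hstab y b := by
  have hab : (a * b) • y = y := by rw [mul_smul, hb, ha]
  simp only [psi, dif_pos ha, dif_pos hb, dif_pos hab]
  rw [← map_mul]
  rfl

lemma psi_one (y : X) : psi hstab y 1 = 1 := by
  have h : psi hstab y 1 = (hstab y).choose 1 := by
    simp only [psi, dif_pos (one_smul G y)]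
    rfl
  rw [h, map_one]

lemma psi_eq_one {y : X} {a : G} (ha : a • y = y) (h : psi hstab y a = 1) : a = 1 := by
  rw [psi, dif_pos ha] at h
  have h2 : (hstab y).choose ⟨a, MulAction.mem_stabilizer_iff.mpr ha⟩ = (hstab y).choose 1 := by
    rw [h, map_one]
  have h3 := (hstab y).choose_spec h2
  exact Subtype.ext_iff.mp h3

def coc (g : G) (x : X) : H :=
  psi hstab (repPt G x) ((secG G (g • x))⁻¹ * g * secG G x)

lemma tau_smul (g : G) (x : X) :
    ((secG G (g • x))⁻¹ * g * secG G x) • repPt G x = repPt G x := by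
  rw [mul_smul, mul_smul, secG_spec, ← repPt_smul g x, inv_smul_eq_iff]
  exact (secG_spec (g • x)).symm

lemma coc_mul (g' g : G) (x : X) :
    coc hstab (g' * g) x = coc hstab g' (g • x) * coc hstab g x := by
  unfold coc
  rw [repPt_smul]
  have ha : ((secG G (g' • g • x))⁻¹ * g' * secG G (g • x)) • repPt G x = repPt G x := by
    have h := tau_smul (G := G) g' (g • x)
    rwa [repPt_smul] at h
  have hb := tau_smul (G := G) g x
  have key : (secG G ((g' * g) • x))⁻¹ * (g' * g) * secG G x
      = ((secG G (g' • g • x))⁻¹ * g' * secG G (g • x)) * ((secG G (g • x))⁻¹ * g * secG G x) := by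
    rw [mul_smul]; group
  rw [key, psi_mul hstab ha hb]

lemma coc_one (x : X) : coc hstab 1 x = 1 := by
  unfold coc
  rw [one_smul]
  have h : (secG G x)⁻¹ * 1 * secG G x = 1 := by group
  rw [h, psi_one]

lemma coc_eq_one {g : G} {x : X} (hgx : g • x = x) (h : coc hstab g x = 1) : g = 1 := by
  unfold coc at h
  rw [hgx] at h
  have hm : ((secG G x)⁻¹ * g * secG G x) • repPt G x = repPt G x := by
    have hh := tau_smul (G := G) g x
    rwa [hgx] at hh
  have h1 := psi_eq_one hstab hm h
  have h2 : g = secG G x * ((secG G x)⁻¹ * g * secG G x) * (secG G x)⁻¹ := by group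
  rw [h2, h1]
  group

def gAction : MulAction G (X × H) where
  smul g p := (g • p.1, coc hstab g p.1 * p.2)
  one_smul p := by
    show ((1 : G) • p.1, coc hstab 1 p.1 * p.2) = p
    rw [one_smul, coc_one, one_mul]
  mul_smul g' g p := by
    show (((g' * g) • p.1, coc hstab (g' * g) p.1 * p.2) : X × H)
        = (g' • g • p.1, coc hstab g' (g • p.1) * (coc hstab g p.1 * p.2))
    rw [mul_smul, coc_mul, mul_assoc]

def hAction (X H : Type*) [Group H] : MulAction Hᵐᵒᵖ (X × H) where
  smul a p := (p.1, p.2 * a.unop)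
  one_smul p := by show (p.1, p.2 * 1) = p; rw [mul_one]
  mul_smul a b p := by
    show (p.1, p.2 * (a * b).unop) = (p.1, p.2 * b.unop * a.unop)
    rw [MulOpposite.unop_mul, ← mul_assoc]

end Aux

/-- If the finitely generated group `G` (with finite symmetric
generating set `S`) acts on a set `X` admitting a Følner exhaustion by finite subsets, and
every point stabilizer `G_x` embeds into the group `H`, then `G` is a generalized amenable
extension of `H`. -/
theorem generalized_amenable_extension_of_amenable_action
    (G H X : Type u) [Group G] [Group H]
    (S : Finset G) (hsymm : ∀ s ∈ S, s⁻¹ ∈ S)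
    (hgen : Subgroup.closure (S : Set G) = ⊤)
    [MulAction G X]
    (Xk : ℕ → Set X) (hfin : ∀ k, (Xk k).Finite)
    (hmono : Monotone Xk) (hexh : (⋃ k, Xk k) = Set.univ)
    (hfolner : Filter.Tendsto
      (fun k => ((((S : Set G) • Xk k) \ Xk k).ncard : ℝ) / (Xk k).ncard)
      Filter.atTop (nhds 0))
    (hstab : ∀ x : X, ∃ φ : MulAction.stabilizer G x →* H, Function.Injective φ) :
    IsGeneralizedAmenableExtension G H S := by
  letI iG : MulAction G (X × H) := gAction hstab
  letI iH : MulAction Hᵐᵒᵖ (X × H) := hAction X H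
  -- key bijection between H-orbits of A ×ˢ univ and A
  have hinj : Function.Injective
      (fun x : X => Quotient.mk (MulAction.orbitRel Hᵐᵒᵖ (X × H)) (x, (1 : H))) := by
    intro x y hxy
    obtain ⟨a, ha⟩ := Quotient.exact hxy
    exact (congrArg Prod.fst ha).symm
  have himg : ∀ A : Set X,
      (fun p => Quotient.mk (MulAction.orbitRel Hᵐᵒᵖ (X × H)) p) '' (A ×ˢ (Set.univ : Set H))
        = (fun x : X => Quotient.mk (MulAction.orbitRel Hᵐᵒᵖ (X × H)) (x, (1 : H))) '' A := by
    intro A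
    ext q
    constructor
    · rintro ⟨⟨x, h⟩, hxh, rfl⟩
      refine ⟨x, hxh.1, Quotient.sound ⟨MulOpposite.op h⁻¹, ?_⟩⟩
      show ((x, h * h⁻¹) : X × H) = (x, 1)
      rw [mul_inv_cancel]
    · rintro ⟨x, hx, rfl⟩
      exact ⟨(x, 1), ⟨hx, trivial⟩, rfl⟩
  have hA : ∀ A : Set X, orbitCount H (A ×ˢ (Set.univ : Set H)) = A.ncard := by
    intro A
    show ((fun p => Quotient.mk (MulAction.orbitRel Hᵐᵒᵖ (X × H)) p) ''
      (A ×ˢ (Set.univ : Set H))).ncard = A.ncard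
    rw [himg A]
    exact Set.ncard_image_of_injective A hinj
  have hsmul : ∀ A : Set X,
      (S : Set G) • (A ×ˢ (Set.univ : Set H)) = ((S : Set G) • A) ×ˢ (Set.univ : Set H) := by
    intro A
    ext ⟨y, h⟩
    constructor
    · rintro ⟨g, hg, ⟨x, h₀⟩, hx, heq⟩
      rw [Prod.ext_iff] at heq
      exact ⟨⟨g, hg, x, hx.1, heq.1⟩, trivial⟩
    · rintro ⟨⟨g, hg, x, hx, rfl⟩, -⟩
      refine ⟨g, hg, (x, (coc hstab g x)⁻¹ * h), ⟨hx, trivial⟩, ?_⟩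
      show (g • x, coc hstab g x * ((coc hstab g x)⁻¹ * h)) = (g • x, h)
      rw [mul_inv_cancel_left]
  have hdiff : ∀ A B : Set X,
      (B ×ˢ (Set.univ : Set H)) \ (A ×ˢ (Set.univ : Set H)) = (B \ A) ×ˢ (Set.univ : Set H) := by
    intro A B
    ext ⟨x, h⟩
    simp [Set.mem_prod]
  refine ⟨X × H, iG, iH, ?_, ?_, ?_, fun k => Xk k ×ˢ (Set.univ : Set H),
    ?_, ?_, ?_, ?_, ?_⟩
  · intro g a p
    show (g • p.1, coc hstab g p.1 * (p.2 * a.unop))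
      = (g • p.1, coc hstab g p.1 * p.2 * a.unop)
    rw [mul_assoc]
  · intro g p hp
    rw [Prod.ext_iff] at hp
    have h2 : coc hstab g p.1 * p.2 = p.2 := hp.2
    have hc : coc hstab g p.1 = 1 := by
      have := mul_right_cancel (a := coc hstab g p.1) (b := p.2) (c := 1)
      exact mul_eq_right.mp h2
    exact coc_eq_one hstab hp.1 hc
  · intro a p hp
    rw [Prod.ext_iff] at hp
    have h2 : p.2 * a.unop = p.2 := hp.2
    have : a.unop = 1 := mul_eq_left.mp h2
    exact MulOpposite.unop_injective this
  · intro k a x hx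
    exact ⟨hx.1, trivial⟩
  · intro k l hkl
    exact Set.prod_mono (hmono hkl) le_rfl
  · rw [← Set.iUnion_prod_const, hexh, Set.univ_prod_univ]
  · intro k
    show ((fun p => Quotient.mk (MulAction.orbitRel Hᵐᵒᵖ (X × H)) p) ''
      (Xk k ×ˢ (Set.univ : Set H))).Finite
    rw [himg]
    exact (hfin k).image _
  · have hkey : ∀ k,
        orbitCount H (((S : Set G) • (Xk k ×ˢ (Set.univ : Set H))) \ (Xk k ×ˢ (Set.univ : Set H)))
          = (((S : Set G) • Xk k) \ Xk k).ncard := by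
      intro k
      rw [hsmul, hdiff, hA]
    simp only [hkey, hA]
    exact hfolner

end
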